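/- arXiv:2101.08736 — 2 statements merged into one kernel-verified Lean document; each statement's English description precedes it below -/
import Mathlib

section
/- For every k ∈ ℕ, the two-dimensional Lebesgue measure of Q_k = Y_k × Y_k equals 2^{−2k}·2^{2m_k}, i.e. μ₂(Q_k) = 2^{2m_k − 2k}. -/
open MeasureTheory Set ENNReal

/-- The 1-periodic Rademacher function: `1` on `[0, 1/2)`, `-1` on `[1/2, 1)`,
extended 1-periodically to `ℝ`. -/
noncomputable def rade (t : ℝ) : ℝ := if Int.fract t < 1 / 2 then 1 else -1

/-- `Yset m k = {t ∈ [0, 2^{m_k}] : ∑_{j=1}^{k} r₀(t / 2^{m_j}) = k}`. -/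
def Yset (m : ℕ → ℕ) (k : ℕ) : Set ℝ :=
  {t | t ∈ Icc (0 : ℝ) (2 ^ m k) ∧ ∑ j ∈ Finset.Icc 1 k, rade (t / 2 ^ m j) = (k : ℝ)}

/-- The crystal `Q_k = Y_k × Y_k ⊆ ℝ²`. -/
def Qset (m : ℕ → ℕ) (k : ℕ) : Set (ℝ × ℝ) := Yset m k ×ˢ Yset m k

/-! ### Auxiliary lemmas -/

/-- The set of `t` satisfying the fractional-part conditions for `j = 1, …, k`. -/
def Aset (m : ℕ → ℕ) (k : ℕ) : Set ℝ :=
  {t | ∀ j ∈ Finset.Icc 1 k, Int.fract (t / 2 ^ m j) < 1 / 2}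

lemma rade_le_one (t : ℝ) : rade t ≤ 1 := by
  unfold rade; split <;> norm_num

lemma sum_rade_iff (m : ℕ → ℕ) (k : ℕ) (t : ℝ) :
    (∑ j ∈ Finset.Icc 1 k, rade (t / 2 ^ m j) = (k : ℝ)) ↔
      ∀ j ∈ Finset.Icc 1 k, Int.fract (t / 2 ^ m j) < 1 / 2 := by
  have hcard : (Finset.Icc 1 k).card = k := by rw [Nat.card_Icc]; omega
  constructor
  · intro h
    have h0 : ∑ j ∈ Finset.Icc 1 k, (1 - rade (t / 2 ^ m j)) = 0 := by
      rw [Finset.sum_sub_distrib, Finset.sum_const, hcard, h]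
      simp
    have h1 := (Finset.sum_eq_zero_iff_of_nonneg
      (fun j _ => by linarith [rade_le_one (t / 2 ^ m j)])).1 h0
    intro j hj
    have := h1 j hj
    have hr : rade (t / 2 ^ m j) = 1 := by linarith
    by_contra hlt
    unfold rade at hr
    rw [if_neg hlt] at hr
    norm_num at hr
  · intro h
    have : ∀ j ∈ Finset.Icc 1 k, rade (t / 2 ^ m j) = 1 := by
      intro j hj; unfold rade; rw [if_pos (h j hj)]
    rw [Finset.sum_congr rfl this, Finset.sum_const, hcard]
    simp

lemma Yset_eq (m : ℕ → ℕ) (k : ℕ) :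
    Yset m k = Aset m k ∩ Icc (0 : ℝ) (2 ^ m k) := by
  ext t
  simp only [Yset, Aset, mem_setOf_eq, mem_inter_iff, sum_rade_iff]
  tauto

lemma Aset_measurable (m : ℕ → ℕ) (k : ℕ) : MeasurableSet (Aset m k) := by
  have : Aset m k = ⋂ j ∈ Finset.Icc 1 k, {t : ℝ | Int.fract (t / 2 ^ m j) < 1 / 2} := by
    ext t; simp [Aset]
  rw [this]
  refine MeasurableSet.biInter (Finset.Icc 1 k).countable_toSet (fun j _ => ?_)
  exact measurableSet_lt ((measurable_id.div_const _).fract) measurable_const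

lemma mono_le (m : ℕ → ℕ) (hmono : ∀ j, 1 ≤ j → m j < m (j + 1)) :
    ∀ j k, 1 ≤ j → j ≤ k → m j ≤ m k := by
  intro j k hj hjk
  induction k with
  | zero => omega
  | succ n ih =>
    rcases Nat.lt_or_ge j (n + 1) with h | h
    · have hn : 1 ≤ n := by omega
      exact le_trans (ih (by omega)) (le_of_lt (hmono n hn))
    · have : j = n + 1 := by omega
      subst this; exact le_rfl

/-- Periodicity of `Aset`. -/
lemma Aset_period (m : ℕ → ℕ) (hmono : ∀ j, 1 ≤ j → m j < m (j + 1)) (k : ℕ) (t : ℝ) :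
    t ∈ Aset m k ↔ t + 2 ^ m k ∈ Aset m k := by
  have key : ∀ j ∈ Finset.Icc 1 k,
      Int.fract ((t + 2 ^ m k) / 2 ^ m j) = Int.fract (t / 2 ^ m j) := by
    intro j hj
    simp only [Finset.mem_Icc] at hj
    have hle : m j ≤ m k := mono_le m hmono j k hj.1 hj.2
    have h2 : ((2 : ℝ) ^ m k) / 2 ^ m j = ((2 ^ (m k - m j) : ℕ) : ℝ) := by
      push_cast
      rw [div_eq_iff (by positivity : ((2:ℝ) ^ m j) ≠ 0), ← pow_add]
      congr 1
      omega
    rw [add_div, h2, Int.fract_add_natCast]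
  constructor
  · intro h j hj; rw [key j hj]; exact h j hj
  · intro h j hj; rw [← key j hj]; exact h j hj

/-- Measure of a periodic set over `N` periods. -/
lemma vol_periodic (A : Set ℝ) (hA : MeasurableSet A) (P : ℝ) (hP : 0 < P)
    (hper : ∀ t, t ∈ A ↔ t + P ∈ A) (N : ℕ) :
    volume (A ∩ Ico 0 ((N : ℝ) * P)) = (N : ℝ≥0∞) * volume (A ∩ Ico 0 P) := by
  have hpern : ∀ n : ℕ, ∀ t, t ∈ A ↔ t + (n : ℝ) * P ∈ A := by
    intro n
    induction n with
    | zero => simp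
    | succ i ih =>
      intro t
      have : t + ((i : ℝ) + 1) * P = (t + (i : ℝ) * P) + P := by ring
      push_cast
      rw [this, ← hper]
      exact ih t
  induction N with
  | zero => simp
  | succ n ih =>
    have hsplit : Ico (0 : ℝ) (((n : ℝ) + 1) * P) =
        Ico 0 ((n : ℝ) * P) ∪ Ico ((n : ℝ) * P) (((n : ℝ) + 1) * P) := by
      rw [Ico_union_Ico_eq_Ico]
      · positivity
      · nlinarith
    have htrans : (fun h : ℝ => h + (n : ℝ) * P) ⁻¹' (A ∩ Ico ((n : ℝ) * P) (((n : ℝ) + 1) * P))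
        = A ∩ Ico 0 P := by
      ext t
      simp only [mem_preimage, mem_inter_iff, mem_Ico]
      constructor
      · rintro ⟨hA', h1, h2⟩
        refine ⟨(hpern n t).2 hA', by linarith, by nlinarith⟩
      · rintro ⟨hA', h1, h2⟩
        refine ⟨(hpern n t).1 hA', by linarith, by nlinarith⟩
    have hdisj : Disjoint (A ∩ Ico (0 : ℝ) ((n : ℝ) * P))
        (A ∩ Ico ((n : ℝ) * P) (((n : ℝ) + 1) * P)) := by
      apply Disjoint.inter_left' ; apply Disjoint.inter_right'
      exact Set.disjoint_left.2 fun x hx hx' => absurd hx'.1 (not_le.2 hx.2)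
    have hmeas : MeasurableSet (A ∩ Ico ((n : ℝ) * P) (((n : ℝ) + 1) * P)) :=
      hA.inter measurableSet_Ico
    have hsecond : volume (A ∩ Ico ((n : ℝ) * P) (((n : ℝ) + 1) * P))
        = volume (A ∩ Ico 0 P) := by
      rw [← htrans, measure_preimage_add_right]
    have hc : ((n + 1 : ℕ) : ℝ) * P = ((n : ℝ) + 1) * P := by push_cast; ring
    rw [hc, hsplit, inter_union_distrib_left, measure_union hdisj hmeas, ih, hsecond]
    push_cast
    ring

/-- The key intersection identity. -/
lemma inter_fract (p : ℕ) (A : Set ℝ) :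
    (A ∩ {t : ℝ | Int.fract (t / 2 ^ p) < 1 / 2}) ∩ Ico 0 ((2 : ℝ) ^ p) =
      A ∩ Ico 0 ((2 : ℝ) ^ p / 2) := by
  have hp : (0 : ℝ) < 2 ^ p := by positivity
  ext t
  simp only [mem_inter_iff, mem_setOf_eq, mem_Ico]
  constructor
  · rintro ⟨⟨hA', hfr⟩, h0, h1⟩
    have heq : Int.fract (t / 2 ^ p) = t / 2 ^ p := by
      rw [Int.fract_eq_self]
      constructor
      · positivity
      · rw [div_lt_one hp]; exact h1
    rw [heq] at hfr
    refine ⟨hA', h0, ?_⟩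
    rw [div_lt_iff₀ hp] at hfr
    linarith [hfr]
  · rintro ⟨hA', h0, h1⟩
    have h1' : t < 2 ^ p := by linarith
    have heq : Int.fract (t / 2 ^ p) = t / 2 ^ p := by
      rw [Int.fract_eq_self]
      constructor
      · positivity
      · rw [div_lt_one hp]; exact h1'
    refine ⟨⟨hA', ?_⟩, h0, h1'⟩
    rw [heq, div_lt_iff₀ hp]
    linarith

lemma Aset_succ (m : ℕ → ℕ) (k : ℕ) :
    Aset m (k + 1) = Aset m k ∩ {t : ℝ | Int.fract (t / 2 ^ m (k + 1)) < 1 / 2} := by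
  ext t
  simp only [Aset, mem_setOf_eq, mem_inter_iff]
  rw [show Finset.Icc 1 (k + 1) = insert (k + 1) (Finset.Icc 1 k) by
    ext j; simp only [Finset.mem_insert, Finset.mem_Icc]; omega]
  simp only [Finset.mem_insert, Finset.mem_Icc]
  constructor
  · intro h
    exact ⟨fun j hj => h j (Or.inr hj), h (k + 1) (Or.inl rfl)⟩
  · rintro ⟨h1, h2⟩ j hj
    rcases hj with rfl | hj
    · exact h2
    · exact h1 j hj

lemma vol_Ico_pow (p : ℕ) : volume (Ico (0 : ℝ) (2 ^ p)) = (2 : ℝ≥0∞) ^ p := by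
  rw [Real.volume_Ico, sub_zero, ENNReal.ofReal_pow (by norm_num)]
  norm_num

lemma vol_Ico_pow_half (p : ℕ) :
    volume (Ico (0 : ℝ) (2 ^ p / 2)) = (2 : ℝ≥0∞) ^ p / 2 := by
  rw [Real.volume_Ico, sub_zero, ENNReal.ofReal_div_of_pos (by norm_num),
    ENNReal.ofReal_pow (by norm_num)]
  norm_num

/-- Main measure computation for one factor (with `Ico`). -/
lemma volA (m : ℕ → ℕ) (hmono : ∀ j, 1 ≤ j → m j < m (j + 1)) :
    ∀ k, 1 ≤ k → volume (Aset m k ∩ Ico 0 ((2 : ℝ) ^ m k)) = 2 ^ m k / 2 ^ k := by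
  intro k hk
  induction k, hk using Nat.le_induction with
  | base =>
    have h0 : Aset m 0 = univ := by
      ext t; simp [Aset]
    rw [Aset_succ, h0, inter_fract, univ_inter, vol_Ico_pow_half]
    norm_num
  | succ k hk ih =>
    rw [Aset_succ, inter_fract]
    have hmk : m k < m (k + 1) := hmono k hk
    set N : ℕ := 2 ^ (m (k + 1) - 1 - m k) with hN
    have hNP : ((N : ℝ)) * 2 ^ m k = 2 ^ m (k + 1) / 2 := by
      rw [hN]
      push_cast
      rw [← pow_add]
      rw [eq_div_iff (by norm_num : (2:ℝ) ≠ 0), ← pow_succ]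
      congr 1
      omega
    have hper := Aset_period m hmono k
    have := vol_periodic (Aset m k) (Aset_measurable m k) (2 ^ m k) (by positivity) hper N
    rw [hNP] at this
    rw [this, ih]
    have hNcast : (N : ℝ≥0∞) = (2 : ℝ≥0∞) ^ (m (k + 1) - 1 - m k) := by
      rw [hN]; push_cast; ring
    rw [hNcast, ← mul_div_assoc, ← pow_add]
    have h1 : m (k + 1) - 1 - m k + m k = m (k + 1) - 1 := by omega
    rw [h1]
    have h2 : (2 : ℝ≥0∞) ^ m (k + 1) = 2 ^ (m (k + 1) - 1) * 2 := by
      rw [← pow_succ]; congr 1; omega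
    rw [h2, pow_succ, ENNReal.mul_div_mul_right _ _ (by norm_num) (by norm_num)]

/-- Volume of one factor `Y_k`. -/
lemma volY (m : ℕ → ℕ) (hmono : ∀ j, 1 ≤ j → m j < m (j + 1)) (k : ℕ) :
    volume (Yset m k) = 2 ^ m k / 2 ^ k := by
  have hIcc : volume (Yset m k) = volume (Aset m k ∩ Ico (0 : ℝ) (2 ^ m k)) := by
    rw [Yset_eq]
    exact (measure_congr ((Filter.EventuallyEq.refl _ _).inter Ico_ae_eq_Icc)).symm
  rcases Nat.eq_zero_or_pos k with rfl | hk
  · have h0 : Aset m 0 = univ := by ext t; simp [Aset]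
    rw [hIcc, h0, univ_inter, vol_Ico_pow]
    simp
  · rw [hIcc, volA m hmono k hk]

/-- For a strictly increasing sequence of naturals `m_1 < m_2 < ⋯`, the crystal `Q_k`
has two-dimensional Lebesgue measure `2^{2 m_k - 2k} = 2^{-2k}·2^{2 m_k}`. -/
theorem statement6 (m : ℕ → ℕ) (hmono : ∀ j, 1 ≤ j → m j < m (j + 1)) (k : ℕ) :
    volume (Qset m k) = 2 ^ (2 * m k) / 2 ^ (2 * k) := by
  rw [Qset, Measure.volume_eq_prod, Measure.prod_prod, volY m hmono k,
    div_eq_mul_inv, div_eq_mul_inv, two_mul, two_mul, pow_add, pow_add,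
    ENNReal.mul_inv (Or.inl (pow_ne_zero _ two_ne_zero))
      (Or.inr (pow_ne_zero _ two_ne_zero))]
  ring
end

section
/- Let k ∈ ℕ and 1 ≤ j ≤ k. Then the average of χ_{Y_k} over the interval [0, 2^{m_j}] equals 2^{−j}; more generally, for every tuple (l_j, l_{j+1}, …, l_{k−1}) with 0 ≤ l_i ≤ 2^{m_{i+1} − m_i − 1} − 1, the average of χ_{Y_k} over the translated interval τ_{l_j·2^{m_j}} τ_{l_{j+1}·2^{m_{j+1}}} ⋯ τ_{l_{k−1}·2^{m_{k−1}}} [0, 2^{m_j}] equals 2^{−j}. The number of such translated intervals is 2^{m_k − m_j + j − k}. -/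
open MeasureTheory Set ENNReal

/-- The translate `τ_s E = {x : x - s ∈ E}`. -/
def tau (s : ℝ) (E : Set ℝ) : Set ℝ := {x | x - s ∈ E}

/-- Tuples `(l_j, …, l_{k-1})` with `0 ≤ l_i ≤ 2^{m_{i+1} - m_i - 1} - 1`, encoded as
functions `ℕ → ℕ` vanishing outside `[j, k-1]`. -/
def tupleSet' (m : ℕ → ℕ) (j k : ℕ) : Set (ℕ → ℕ) :=
  {l | (∀ i, j ≤ i → i < k → l i < 2 ^ (m (i + 1) - m i - 1)) ∧
    ∀ i, i < j ∨ k ≤ i → l i = 0}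



lemma rade_eq_one_iff {t : ℝ} : rade t = 1 ↔ Int.fract t < 1 / 2 := by
  unfold rade
  split
  next h => exact ⟨fun _ => h, fun _ => rfl⟩
  next h => exact ⟨fun hc => by norm_num at hc, fun hc => absurd hc h⟩

lemma mLe (m : ℕ → ℕ) (hmono : ∀ i, 1 ≤ i → m i < m (i + 1)) :
    ∀ a b, 1 ≤ a → a ≤ b → m a ≤ m b := by
  intro a b ha hab
  induction b, hab using Nat.le_induction with
  | base => exact le_refl _
  | succ b hab ih => exact ih.trans (le_of_lt (hmono b (ha.trans hab)))

def goodSet (m : ℕ → ℕ) (j : ℕ) : Set ℝ :=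
  {t | ∀ i ∈ Finset.Icc 1 j, Int.fract (t / 2 ^ m i) < 1 / 2}

lemma goodSet_meas (m : ℕ → ℕ) (j : ℕ) : MeasurableSet (goodSet m j) := by
  have h : goodSet m j = ⋂ i ∈ Finset.Icc 1 j, {t : ℝ | Int.fract (t / 2 ^ m i) < 1 / 2} := by
    ext t; simp [goodSet]
  rw [h]
  exact MeasurableSet.biInter (Finset.Icc 1 j).countable_toSet (fun i _ =>
    measurableSet_lt (measurable_fract.comp (measurable_id.div_const _)) measurable_const)

lemma sum_rade_eq_iff (m : ℕ → ℕ) (k : ℕ) (t : ℝ) :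
    (∑ i ∈ Finset.Icc 1 k, rade (t / 2 ^ m i) = (k : ℝ)) ↔
      ∀ i ∈ Finset.Icc 1 k, Int.fract (t / 2 ^ m i) < 1 / 2 := by
  have hcard : (Finset.Icc 1 k).card = k := by rw [Nat.card_Icc]; omega
  constructor
  · intro h i hi
    by_contra hc
    have h1 : ∀ x ∈ Finset.Icc 1 k, rade (t / 2 ^ m x) ≤ (1 : ℝ) := by
      intro x _; unfold rade; split <;> norm_num
    have h2 : rade (t / 2 ^ m i) < 1 := by
      unfold rade; rw [if_neg hc]; norm_num
    have hlt : ∑ x ∈ Finset.Icc 1 k, rade (t / 2 ^ m x) <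
        ∑ _x ∈ Finset.Icc 1 k, (1 : ℝ) :=
      Finset.sum_lt_sum h1 ⟨i, hi, h2⟩
    rw [h, Finset.sum_const, hcard, nsmul_eq_mul, mul_one] at hlt
    exact lt_irrefl _ hlt
  · intro h
    rw [Finset.sum_congr rfl (fun i hi => rade_eq_one_iff.2 (h i hi))]
    rw [Finset.sum_const, hcard, nsmul_eq_mul, mul_one]

lemma fract_div_lt_half {t : ℝ} {n : ℕ} (h0 : 0 ≤ t) (h1 : 2 * t < 2 ^ n) :
    Int.fract (t / 2 ^ n) < 1 / 2 := by
  have hp : (0 : ℝ) < 2 ^ n := by positivity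
  rw [Int.fract_eq_self.2 ⟨by positivity, by rw [div_lt_one hp]; linarith⟩]
  rw [div_lt_iff₀ hp]; linarith

lemma half_of_fract {t : ℝ} {n : ℕ} (h0 : 0 ≤ t) (h1 : t < 2 ^ n)
    (h : Int.fract (t / 2 ^ n) < 1 / 2) : 2 * t < 2 ^ n := by
  have hp : (0 : ℝ) < 2 ^ n := by positivity
  rw [Int.fract_eq_self.2 ⟨by positivity, by rw [div_lt_one hp]; linarith⟩] at h
  rw [div_lt_iff₀ hp] at h; linarith

lemma vol_periodized {E : Set ℝ} (hE : MeasurableSet E) {c : ℝ} (hc : 0 < c)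
    (hper : ∀ (p : ℕ) (t : ℝ), t + p * c ∈ E ↔ t ∈ E) (n : ℕ) :
    volume (E ∩ Ico 0 (n * c)) = n * volume (E ∩ Ico 0 c) := by
  induction n with
  | zero => simp
  | succ n ih =>
    have hcc : ((n : ℝ) + 1) * c = (n : ℝ) * c + c := by ring
    have hsplit : E ∩ Ico 0 (((n : ℕ) + 1 : ℕ) * c) =
        (E ∩ Ico 0 ((n : ℝ) * c)) ∪ (E ∩ Ico ((n : ℝ) * c) (((n : ℝ) + 1) * c)) := by
      push_cast
      ext x
      simp only [mem_inter_iff, mem_Ico, mem_union]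
      constructor
      · rintro ⟨hx, h0, h1⟩
        rcases lt_or_ge x ((n : ℝ) * c) with h | h
        · exact Or.inl ⟨hx, h0, h⟩
        · exact Or.inr ⟨hx, h, h1⟩
      · rintro (⟨hx, h0, h1⟩ | ⟨hx, h0, h1⟩)
        · exact ⟨hx, h0, by linarith⟩
        · have : (0:ℝ) ≤ (n : ℝ) * c := by positivity
          exact ⟨hx, by linarith, h1⟩
    have hdisj : Disjoint (E ∩ Ico 0 ((n : ℝ) * c))
        (E ∩ Ico ((n : ℝ) * c) (((n : ℝ) + 1) * c)) := by
      apply Set.disjoint_left.2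
      rintro x ⟨_, _, h1⟩ ⟨_, h2, _⟩
      exact absurd h2 (not_le.2 h1)
    have hpre : (fun x : ℝ => (n : ℝ) * c + x) ⁻¹'
        (E ∩ Ico ((n : ℝ) * c) (((n : ℝ) + 1) * c)) = E ∩ Ico 0 c := by
      ext x
      simp only [mem_preimage, mem_inter_iff, mem_Ico]
      constructor
      · rintro ⟨hE', h0, h1⟩
        rw [add_comm] at hE'
        exact ⟨(hper n x).1 hE', by linarith, by linarith⟩
      · rintro ⟨hE', h0, h1⟩
        refine ⟨by rw [add_comm]; exact (hper n x).2 hE', by linarith, by linarith⟩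
    have htrans : volume (E ∩ Ico ((n : ℝ) * c) (((n : ℝ) + 1) * c)) =
        volume (E ∩ Ico 0 c) := by
      rw [← measure_preimage_add volume ((n : ℝ) * c) (E ∩ Ico ((n : ℝ) * c) (((n : ℝ) + 1) * c)),
        hpre]
    rw [hsplit, measure_union hdisj (hE.inter measurableSet_Ico), ih, htrans]
    push_cast
    ring
lemma goodSet_period (m : ℕ → ℕ) (hmono : ∀ i, 1 ≤ i → m i < m (i + 1)) (j : ℕ)
    (p : ℕ) (t : ℝ) : t + (p : ℝ) * 2 ^ m j ∈ goodSet m j ↔ t ∈ goodSet m j := by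
  have hfr : ∀ i ∈ Finset.Icc 1 j,
      Int.fract ((t + (p : ℝ) * 2 ^ m j) / 2 ^ m i) = Int.fract (t / 2 ^ m i) := by
    intro i hi
    obtain ⟨h1, h2⟩ := Finset.mem_Icc.1 hi
    have hmi : m i ≤ m j := mLe m hmono i j h1 h2
    have hpow : (2 : ℝ) ^ m j = 2 ^ m i * 2 ^ (m j - m i) := by
      rw [← pow_add]; congr 1; omega
    have hp : (0 : ℝ) < 2 ^ m i := by positivity
    have heq : (t + (p : ℝ) * 2 ^ m j) / 2 ^ m i =
        t / 2 ^ m i + ((p * 2 ^ (m j - m i) : ℕ) : ℝ) := by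
      rw [hpow]; push_cast; field_simp
    rw [heq, Int.fract_add_natCast]
  constructor
  · intro h i hi; rw [← hfr i hi]; exact h i hi
  · intro h i hi; rw [hfr i hi]; exact h i hi

lemma ofReal_pow2 (n : ℕ) : ENNReal.ofReal ((2 : ℝ) ^ n) = 2 ^ n := by
  rw [ENNReal.ofReal_pow (by norm_num)]
  norm_num

lemma vol_goodSet (m : ℕ → ℕ) (hmono : ∀ i, 1 ≤ i → m i < m (i + 1)) :
    ∀ j, 1 ≤ j →
      volume (goodSet m j ∩ Ico 0 ((2 : ℝ) ^ m j)) = 2 ^ m j / 2 ^ j := by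
  intro j hj
  induction j, hj using Nat.le_induction with
  | base =>
    have hp : (0 : ℝ) < 2 ^ m 1 := by positivity
    have hset : goodSet m 1 ∩ Ico 0 ((2 : ℝ) ^ m 1) = Ico 0 ((2 : ℝ) ^ m 1 / 2) := by
      ext t
      simp only [goodSet, mem_inter_iff, mem_setOf_eq, mem_Ico]
      constructor
      · rintro ⟨hg, h0, h1⟩
        have h := half_of_fract h0 h1 (hg 1 (by simp))
        exact ⟨h0, by linarith⟩
      · rintro ⟨h0, h1⟩
        have h1' : t < 2 ^ m 1 := by linarith
        refine ⟨fun i hi => ?_, h0, h1'⟩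
        have : i = 1 := by have := Finset.mem_Icc.1 hi; omega
        subst this
        exact fract_div_lt_half h0 (by linarith)
    rw [hset, Real.volume_Ico, sub_zero, ENNReal.ofReal_div_of_pos (by norm_num), ofReal_pow2,
      pow_one]
    norm_num
  | succ j hj ih =>
    have hm : m j < m (j + 1) := hmono j hj
    set n := m (j + 1) - 1 - m j with hn
    have hmj1 : m (j + 1) = m j + n + 1 := by omega
    have hkey : ((2 ^ n : ℕ) : ℝ) * 2 ^ m j * 2 = 2 ^ m (j + 1) := by
      push_cast
      rw [hmj1, pow_add, pow_add, pow_one]; ring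
    have hpos : (0 : ℝ) < 2 ^ m j := by positivity
    have hset : goodSet m (j + 1) ∩ Ico 0 ((2 : ℝ) ^ m (j + 1)) =
        goodSet m j ∩ Ico 0 (((2 ^ n : ℕ) : ℝ) * 2 ^ m j) := by
      ext t
      simp only [goodSet, mem_inter_iff, mem_setOf_eq, mem_Ico]
      constructor
      · rintro ⟨hg, h0, h1⟩
        have hcond := hg (j + 1) (Finset.mem_Icc.2 ⟨by omega, le_refl _⟩)
        have h2t := half_of_fract h0 h1 hcond
        refine ⟨fun i hi => ?_, h0, by linarith⟩
        have := Finset.mem_Icc.1 hi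
        exact hg i (Finset.mem_Icc.2 ⟨this.1, by omega⟩)
      · rintro ⟨hg, h0, h1⟩
        have h2t : 2 * t < 2 ^ m (j + 1) := by linarith
        refine ⟨fun i hi => ?_, h0, by linarith⟩
        obtain ⟨hi1, hi2⟩ := Finset.mem_Icc.1 hi
        rcases Nat.lt_or_ge i (j + 1) with h | h
        · exact hg i (Finset.mem_Icc.2 ⟨hi1, by omega⟩)
        · have : i = j + 1 := by omega
          subst this
          exact fract_div_lt_half h0 h2t
    rw [hset, vol_periodized (goodSet_meas m j) hpos (goodSet_period m hmono j) (2 ^ n), ih]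
    have e1 : (2 : ℝ≥0∞) ^ m (j + 1) = 2 ^ n * 2 ^ m j * 2 := by
      rw [hmj1, pow_add, pow_add, pow_one]; ring
    have e2 : (2 : ℝ≥0∞) ^ (j + 1) = 2 ^ j * 2 := by rw [pow_add, pow_one]
    rw [e1, e2, ENNReal.mul_div_mul_right _ _ two_ne_zero ofNat_ne_top]
    push_cast
    rw [mul_div_assoc]

def SNat (m l : ℕ → ℕ) (j a : ℕ) : ℕ := ∑ i ∈ Finset.Ico j a, l i * 2 ^ m i

lemma SNat_cast (m l : ℕ → ℕ) (j a : ℕ) :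
    ((SNat m l j a : ℕ) : ℝ) = ∑ i ∈ Finset.Ico j a, (l i : ℝ) * 2 ^ m i := by
  unfold SNat
  push_cast
  rfl

lemma core (m : ℕ → ℕ) (hmono : ∀ i, 1 ≤ i → m i < m (i + 1)) (k j : ℕ)
    (hj : 1 ≤ j) (hjk : j ≤ k) (l : ℕ → ℕ) (hl : l ∈ tupleSet' m j k) :
    volume (Yset m k ∩ Icc ((SNat m l j k : ℕ) : ℝ) (((SNat m l j k : ℕ) : ℝ) + 2 ^ m j)) =
      2 ^ m j / 2 ^ j := by
  classical
  -- arithmetic facts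
  have factAB : ∀ a, j ≤ a → a ≤ k →
      SNat m l j a + 2 ^ m j ≤ 2 ^ m a ∧
        (j < a → SNat m l j a + 2 ^ m j ≤ 2 ^ (m a - 1)) := by
    intro a hja
    induction a, hja using Nat.le_induction with
    | base =>
      intro _
      constructor
      · simp [SNat]
      · omega
    | succ a hja ih =>
      intro hak
      have h1 := (ih (by omega)).1
      have hml : m a < m (a + 1) := hmono a (hj.trans hja)
      have hla : l a < 2 ^ (m (a + 1) - m a - 1) := hl.1 a hja (by omega)
      have hSN : SNat m l j (a + 1) = SNat m l j a + l a * 2 ^ m a :=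
        Finset.sum_Ico_succ_top hja _
      set e := m (a + 1) - m a - 1 with he
      have hme : m (a + 1) - 1 = m a + e := by omega
      have hle : l a * 2 ^ m a ≤ (2 ^ e - 1) * 2 ^ m a :=
        Nat.mul_le_mul_right _ (by omega)
      have h2 : 2 ^ m a + (2 ^ e - 1) * 2 ^ m a = 2 ^ (m a + e) := by
        have h3 : (1:ℕ) ≤ 2 ^ e := Nat.one_le_two_pow
        have h4 : (2 ^ e - 1) * 2 ^ m a = 2 ^ e * 2 ^ m a - 2 ^ m a := by
          rw [Nat.sub_mul, one_mul]
        have h5 : (2:ℕ) ^ (m a + e) = 2 ^ e * 2 ^ m a := by rw [pow_add]; ring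
        have h6 : (2:ℕ) ^ m a ≤ 2 ^ e * 2 ^ m a := Nat.le_mul_of_pos_left _ (by positivity)
        omega
      have key : SNat m l j (a + 1) + 2 ^ m j ≤ 2 ^ (m (a + 1) - 1) := by
        rw [hme, hSN]
        omega
      refine ⟨key.trans (Nat.pow_le_pow_right (by norm_num) (by omega)), fun _ => key⟩
  -- divisibility facts
  have hdvd_low : ∀ i, 1 ≤ i → i ≤ j → (2 ^ m i : ℕ) ∣ SNat m l j k := by
    intro i h1 h2
    apply Finset.dvd_sum
    intro i' hi'
    exact Dvd.dvd.mul_left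
      (pow_dvd_pow 2 (mLe m hmono i i' h1 (h2.trans (Finset.mem_Ico.1 hi').1))) _
  have hsplitq : ∀ a, j ≤ a → a ≤ k → ∃ q : ℕ, SNat m l j k = SNat m l j a + q * 2 ^ m a := by
    intro a hja hak
    have hsum : SNat m l j k = SNat m l j a + ∑ i ∈ Finset.Ico a k, l i * 2 ^ m i :=
      (Finset.sum_Ico_consecutive _ hja hak).symm
    have hd : (2 ^ m a : ℕ) ∣ ∑ i ∈ Finset.Ico a k, l i * 2 ^ m i :=
      Finset.dvd_sum fun i' hi' => Dvd.dvd.mul_left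
        (pow_dvd_pow 2 (mLe m hmono a i' (hj.trans hja) (Finset.mem_Ico.1 hi').1)) _
    obtain ⟨q, hq⟩ := hd
    exact ⟨q, by rw [hsum, hq, mul_comm]⟩
  set S : ℝ := ((SNat m l j k : ℕ) : ℝ) with hS
  have hS0 : 0 ≤ S := Nat.cast_nonneg _
  -- the membership claim
  have hmem : ∀ x : ℝ, 0 ≤ x → x < 2 ^ m j → (S + x ∈ Yset m k ↔ x ∈ goodSet m j) := by
    intro x hx0 hx1
    have hAk := (factAB k hjk le_rfl).1
    have hbound : S + x ≤ 2 ^ m k := by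
      have h := hAk
      have h' : ((SNat m l j k : ℕ) : ℝ) + (2 : ℝ) ^ m j ≤ 2 ^ m k := by
        exact_mod_cast h
      linarith
    have h0 : (0 : ℝ) ≤ S + x := by linarith
    have hfr_low : ∀ i, 1 ≤ i → i ≤ j →
        Int.fract ((S + x) / 2 ^ m i) = Int.fract (x / 2 ^ m i) := by
      intro i h1 h2
      obtain ⟨q, hq⟩ := hdvd_low i h1 h2
      have hp : (0 : ℝ) < 2 ^ m i := by positivity
      have heq : (S + x) / 2 ^ m i = x / 2 ^ m i + (q : ℝ) := by
        rw [hS, hq]; push_cast; field_simp; ring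
      rw [heq, Int.fract_add_natCast]
    have hfr_high : ∀ i, j < i → i ≤ k → Int.fract ((S + x) / 2 ^ m i) < 1 / 2 := by
      intro i hji hik
      obtain ⟨q, hq⟩ := hsplitq i (le_of_lt hji) hik
      have hB := (factAB i (le_of_lt hji) hik).2 hji
      have hm1 : 1 ≤ m i := by
        have ha := hmono j hj
        have hb := mLe m hmono (j + 1) i (by omega) hji
        omega
      have hp : (0 : ℝ) < 2 ^ m i := by positivity
      have heq : (S + x) / 2 ^ m i = (((SNat m l j i : ℕ) : ℝ) + x) / 2 ^ m i + (q : ℝ) := by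
        rw [hS, hq]; push_cast; field_simp; ring
      rw [heq, Int.fract_add_natCast]
      apply fract_div_lt_half (by positivity)
      have hc : ((SNat m l j i : ℕ) : ℝ) + (2 : ℝ) ^ m j ≤ (2 : ℝ) ^ (m i - 1) := by
        exact_mod_cast hB
      have h2m : (2 : ℝ) ^ (m i - 1) * 2 = 2 ^ m i := by
        rw [← pow_succ]; congr 1; omega
      nlinarith
    simp only [Yset, mem_setOf_eq, mem_Icc, goodSet]
    rw [sum_rade_eq_iff]
    constructor
    · rintro ⟨-, hall⟩ i hi
      obtain ⟨hi1, hi2⟩ := Finset.mem_Icc.1 hi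
      have h := hall i (Finset.mem_Icc.2 ⟨hi1, hi2.trans hjk⟩)
      rwa [hfr_low i hi1 hi2] at h
    · intro hg
      refine ⟨⟨h0, hbound⟩, fun i hi => ?_⟩
      obtain ⟨hi1, hi2⟩ := Finset.mem_Icc.1 hi
      rcases le_or_gt i j with h | h
      · rw [hfr_low i hi1 h]; exact hg i (Finset.mem_Icc.2 ⟨hi1, h⟩)
      · exact hfr_high i h hi2
  -- now the Ico volume
  have hpre : (fun x : ℝ => S + x) ⁻¹' (Yset m k ∩ Ico S (S + 2 ^ m j)) =
      goodSet m j ∩ Ico 0 ((2 : ℝ) ^ m j) := by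
    ext x
    simp only [mem_preimage, mem_inter_iff, mem_Ico]
    constructor
    · rintro ⟨hY, h0, h1⟩
      have hx0 : (0 : ℝ) ≤ x := by linarith
      have hx1 : x < 2 ^ m j := by linarith
      exact ⟨(hmem x hx0 hx1).1 hY, hx0, hx1⟩
    · rintro ⟨hg, hx0, hx1⟩
      exact ⟨(hmem x hx0 hx1).2 hg, by linarith, by linarith⟩
  have hIco : volume (Yset m k ∩ Ico S (S + 2 ^ m j)) = 2 ^ m j / 2 ^ j := by
    calc volume (Yset m k ∩ Ico S (S + 2 ^ m j))
        = volume ((fun x : ℝ => S + x) ⁻¹' (Yset m k ∩ Ico S (S + 2 ^ m j))) :=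
          (measure_preimage_add volume S _).symm
      _ = volume (goodSet m j ∩ Ico 0 ((2 : ℝ) ^ m j)) := by rw [hpre]
      _ = 2 ^ m j / 2 ^ j := vol_goodSet m hmono j hj
  apply le_antisymm
  · calc volume (Yset m k ∩ Icc S (S + 2 ^ m j))
        ≤ volume ((Yset m k ∩ Ico S (S + 2 ^ m j)) ∪ {S + 2 ^ m j}) := by
          apply measure_mono
          rintro x ⟨h1, h2, h3⟩
          rcases lt_or_eq_of_le h3 with h | h
          · exact Or.inl ⟨h1, h2, h⟩
          · exact Or.inr (by simp [h])
      _ ≤ volume (Yset m k ∩ Ico S (S + 2 ^ m j)) + volume ({S + 2 ^ m j} : Set ℝ) :=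
          measure_union_le _ _
      _ = 2 ^ m j / 2 ^ j := by rw [hIco, Real.volume_singleton, add_zero]
  · rw [← hIco]
    exact measure_mono (inter_subset_inter_right _ Ico_subset_Icc_self)

lemma maddLe (m : ℕ → ℕ) (hmono : ∀ i, 1 ≤ i → m i < m (i + 1)) :
    ∀ a b, 1 ≤ a → a ≤ b → m a + (b - a) ≤ m b := by
  intro a b ha hab
  induction b, hab using Nat.le_induction with
  | base => omega
  | succ b hab ih =>
    have := hmono b (ha.trans hab)
    omega

lemma msum (m : ℕ → ℕ) (hmono : ∀ i, 1 ≤ i → m i < m (i + 1)) (j : ℕ) (hj : 1 ≤ j) :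
    ∀ k, j ≤ k → ∑ i ∈ Finset.Ico j k, (m (i + 1) - m i - 1) = m k - m j - (k - j) := by
  intro k hjk
  induction k, hjk using Nat.le_induction with
  | base => simp
  | succ k hjk ih =>
    rw [Finset.sum_Ico_succ_top hjk, ih]
    have h1 := maddLe m hmono j k hj hjk
    have h2 := hmono k (hj.trans hjk)
    omega

lemma tuple_card (m : ℕ → ℕ) (hmono : ∀ i, 1 ≤ i → m i < m (i + 1)) (k j : ℕ)
    (hj : 1 ≤ j) (hjk : j ≤ k) :
    (tupleSet' m j k).ncard = 2 ^ (m k - m j - (k - j)) := by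
  classical
  set ext : (∀ a ∈ Finset.Ico j k, ℕ) → (ℕ → ℕ) :=
    fun g i => if h : i ∈ Finset.Ico j k then g i h else 0 with hext
  have hinj : Function.Injective ext := by
    intro g g' he
    funext i hi
    have h := congrFun he i
    rw [hext] at h
    dsimp only at h
    rwa [dif_pos hi, dif_pos hi] at h
  set F : Finset (ℕ → ℕ) :=
    ((Finset.Ico j k).pi (fun i => Finset.range (2 ^ (m (i + 1) - m i - 1)))).image ext with hF
  have hset : tupleSet' m j k = ↑F := by
    ext l
    simp only [hF, Finset.coe_image, Set.mem_image, Finset.mem_coe, Finset.mem_pi,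
      Finset.mem_range, tupleSet', mem_setOf_eq]
    constructor
    · rintro ⟨h1, h2⟩
      refine ⟨fun i _ => l i, fun i hi => ?_, ?_⟩
      · obtain ⟨ha, hb⟩ := Finset.mem_Ico.1 hi
        exact h1 i ha hb
      · funext i
        by_cases hi : i ∈ Finset.Ico j k
        · rw [hext]; dsimp only; rw [dif_pos hi]
        · have hni : i < j ∨ k ≤ i := by
            simp only [Finset.mem_Ico] at hi
            omega
          rw [hext]; dsimp only; rw [dif_neg hi]
          exact (h2 i hni).symm
    · rintro ⟨g, hg, rfl⟩
      constructor
      · intro i h1 h2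
        have hi : i ∈ Finset.Ico j k := Finset.mem_Ico.2 ⟨h1, h2⟩
        rw [hext]; dsimp only; rw [dif_pos hi]
        exact hg i hi
      · intro i hi
        have hni : i ∉ Finset.Ico j k := by
          simp only [Finset.mem_Ico]
          omega
        rw [hext]; dsimp only; rw [dif_neg hni]
  rw [hset, Set.ncard_coe_finset, hF, Finset.card_image_of_injective _ hinj, Finset.card_pi]
  simp only [Finset.card_range]
  rw [Finset.prod_pow_eq_pow_sum, msum m hmono j hj k hjk]

lemma tau_zero (E : Set ℝ) : tau 0 E = E := by
  ext x; simp [tau]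


/-- For `1 ≤ j ≤ k`, the average of `χ_{Y_k}` over `[0, 2^{m_j}]` equals `2^{-j}`, and more
generally the average of `χ_{Y_k}` over each translated interval
`τ_{l_j·2^{m_j}} ⋯ τ_{l_{k-1}·2^{m_{k-1}}} [0, 2^{m_j}]` (with
`0 ≤ l_i ≤ 2^{m_{i+1}-m_i-1}-1`) equals `2^{-j}`; the number of such translated intervals
is `2^{m_k - m_j - (k - j)}`. -/
theorem statement9 (m : ℕ → ℕ) (hmono : ∀ i, 1 ≤ i → m i < m (i + 1)) (k j : ℕ)
    (hj : 1 ≤ j) (hjk : j ≤ k) :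
    (volume (Yset m k ∩ Icc (0 : ℝ) (2 ^ m j)) / volume (Icc (0 : ℝ) (2 ^ m j)) =
      ((2 : ℝ≥0∞) ^ j)⁻¹) ∧
    (∀ l ∈ tupleSet' m j k,
      volume (Yset m k ∩
          tau (∑ i ∈ Finset.Ico j k, (l i : ℝ) * 2 ^ m i) (Icc (0 : ℝ) (2 ^ m j))) /
        volume (tau (∑ i ∈ Finset.Ico j k, (l i : ℝ) * 2 ^ m i) (Icc (0 : ℝ) (2 ^ m j))) =
        ((2 : ℝ≥0∞) ^ j)⁻¹) ∧
    (tupleSet' m j k).ncard = 2 ^ (m k - m j - (k - j)) := by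
  have htau : ∀ s : ℝ, tau s (Icc 0 ((2 : ℝ) ^ m j)) = Icc s (s + 2 ^ m j) := by
    intro s; ext x
    simp only [tau, mem_setOf_eq, mem_Icc]
    constructor <;> rintro ⟨h1, h2⟩ <;> constructor <;> linarith
  have hvolI : ∀ s : ℝ, volume (Icc s (s + (2 : ℝ) ^ m j)) = 2 ^ m j := by
    intro s
    rw [Real.volume_Icc, add_sub_cancel_left, ofReal_pow2]
  have hne0 : ((2 : ℝ≥0∞) ^ m j) ≠ 0 := pow_ne_zero _ (by norm_num)
  have hnetop : ((2 : ℝ≥0∞) ^ m j) ≠ ⊤ := ENNReal.pow_ne_top (by norm_num)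
  have hfinal : ((2 : ℝ≥0∞) ^ m j / 2 ^ j) / 2 ^ m j = ((2 : ℝ≥0∞) ^ j)⁻¹ := by
    rw [div_eq_mul_inv, div_eq_mul_inv, mul_comm ((2 : ℝ≥0∞) ^ m j), mul_assoc,
      ENNReal.mul_inv_cancel hne0 hnetop, mul_one]
  have key : ∀ l ∈ tupleSet' m j k,
      volume (Yset m k ∩
          tau (∑ i ∈ Finset.Ico j k, (l i : ℝ) * 2 ^ m i) (Icc (0 : ℝ) (2 ^ m j))) /
        volume (tau (∑ i ∈ Finset.Ico j k, (l i : ℝ) * 2 ^ m i) (Icc (0 : ℝ) (2 ^ m j))) =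
        ((2 : ℝ≥0∞) ^ j)⁻¹ := by
    intro l hl
    have hc := core m hmono k j hj hjk l hl
    rw [show (∑ i ∈ Finset.Ico j k, (l i : ℝ) * 2 ^ m i) = ((SNat m l j k : ℕ) : ℝ) from
      (SNat_cast m l j k).symm, htau, hvolI, hc, hfinal]
  refine ⟨?_, key, tuple_card m hmono k j hj hjk⟩
  have h0mem : (fun _ : ℕ => 0) ∈ tupleSet' m j k :=
    ⟨fun i _ _ => Nat.one_le_two_pow, fun i _ => rfl⟩
  have h := key (fun _ => 0) h0mem
  have hsum : (∑ i ∈ Finset.Ico j k, (((fun _ : ℕ => 0) i : ℕ) : ℝ) * 2 ^ m i) = 0 := by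
    simp
  rw [hsum, tau_zero] at h
  exact h
end
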